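/- Assume A(p) > 0 for all p ∈ ℝ. Then for every transformation datum, every p ∈ ℝ, and every v ∈ V: (Ā(f p))^(2/(n−2)) • (exp(2·γ₁ p) • v) = (A p)^(2/(n−2)) • v (real powers). That is, the invariant metric ĝ := A^(2/(n−2))·g, formed pointwise from the non-minimal coupling A and the metric, is unchanged under the conformal–almost-geodesic frame transformations. -/

import Mathlib

/-- Transformation rule (t1) for the non-minimal coupling coefficient `A`:
`Ā(f x) = exp(−(n−2)·γ₁ x)·A x`. -/
noncomputable def transA (n : ℕ) (f : ℝ ≃ ℝ) (γ₁ A : ℝ → ℝ) : ℝ → ℝ :=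
  fun y => Real.exp (-((n : ℝ) - 2) * γ₁ (f.symm y)) * A (f.symm y)

/-- The invariant metric `ĝ := A^(2/(n−2))·g` is unchanged under the
conformal–almost-geodesic frame transformations: for `A > 0`, and `v ∈ V` the
value of the metric at a fixed spacetime point (transforming as
`v ↦ exp(2·γ₁ p)•v` while the scalar field value transforms as `p ↦ f p`),
one has `(Ā(f p))^(2/(n−2)) • (exp(2·γ₁ p)•v) = (A p)^(2/(n−2)) • v`. -/
theorem invariant_metric_hat (n : ℕ) (hn : 3 ≤ n)
    {V : Type*} [AddCommGroup V] [Module ℝ V]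
    (f : ℝ ≃ ℝ) (γ₁ γ₂ γ₃ : ℝ → ℝ) (A : ℝ → ℝ) (hA : ∀ x, 0 < A x)
    (p : ℝ) (v : V) :
    (transA n f γ₁ A (f p)) ^ ((2 : ℝ) / ((n : ℝ) - 2)) • (Real.exp (2 * γ₁ p) • v)
      = (A p) ^ ((2 : ℝ) / ((n : ℝ) - 2)) • v := by
  have hne : ((n : ℝ) - 2) ≠ 0 := by
    have : (3 : ℝ) ≤ (n : ℝ) := by exact_mod_cast hn
    linarith
  have key : (transA n f γ₁ A (f p)) ^ ((2 : ℝ) / ((n : ℝ) - 2))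
      = Real.exp (-(2 * γ₁ p)) * (A p) ^ ((2 : ℝ) / ((n : ℝ) - 2)) := by
    simp only [transA, Equiv.symm_apply_apply]
    rw [Real.mul_rpow (Real.exp_pos _).le (hA p).le, ← Real.exp_mul]
    congr 2
    field_simp
  rw [key, smul_smul, mul_assoc, mul_comm (Real.exp (-(2 * γ₁ p))), mul_assoc, ← Real.exp_add]
  simp
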